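/- Let (G_n)_{n ∈ ℕ} be a family of finite groups and suppose there is an infinite set U ⊆ ℕ such that for every n in U the group G_n involves the alternating group A_n. Then for every nonprincipal ultrafilter 𝒰 on ℕ containing U, the ultraproduct of the G_n with respect to 𝒰 contains a free subgroup of rank 2. -/

import Mathlib

open FirstOrder

/-- The first-order language of groups: one constant (the identity), one unary function
symbol (inversion), one binary function symbol (multiplication) and no relation symbols. -/
def GroupLang : FirstOrder.Language where
  Functions := fun n =>
    match n with
    | 0 => Unit
    | 1 => Unit
    | 2 => Unit
    | _ => Empty
  Relations := fun _ => Empty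

/-- Every group is a structure for the language of groups in the natural way. -/
instance groupLangStructure (G : Type*) [Group G] : GroupLang.Structure G where
  funMap := fun {n} f x =>
    match n, f, x with
    | 0, _, _ => 1
    | 1, _, x => (x 0)⁻¹
    | 2, _, x => x 0 * x 1
  RelMap := fun {n} r _ => r.elim

/-- The setoid on the product of a family of types given by eventual equality along an
ultrafilter. -/
def uprodSetoid {ι : Type*} (𝒰 : Ultrafilter ι) (G : ι → Type*) : Setoid (∀ i, G i) where
  r f g := ∀ᶠ i in (𝒰 : Filter ι), f i = g i
  iseqv :=
    ⟨fun _ => Filter.Eventually.of_forall fun _ => rfl,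
     fun h => h.mono fun _ hi => hi.symm,
     fun h₁ h₂ => h₂.mp (h₁.mono fun _ hi hi' => hi.trans hi')⟩

theorem uprodSetoid_ev {ι : Type*} {𝒰 : Ultrafilter ι} {G : ι → Type*} {f g : ∀ i, G i}
    (h : (uprodSetoid 𝒰 G).r f g) : ∀ᶠ i in (𝒰 : Filter ι), f i = g i := h

/-- The ultraproduct of a family of types with respect to an ultrafilter. -/
def UProd {ι : Type*} (𝒰 : Ultrafilter ι) (G : ι → Type*) : Type _ :=
  Quotient (uprodSetoid 𝒰 G)

/-- The class of an element of the product in the ultraproduct. -/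
def UProd.mk {ι : Type*} (𝒰 : Ultrafilter ι) (G : ι → Type*) (f : ∀ i, G i) :
    UProd 𝒰 G :=
  Quotient.mk (uprodSetoid 𝒰 G) f

/-- An ultraproduct of groups is a group, with coordinatewise operations. -/
instance UProd.instGroup {ι : Type*} (𝒰 : Ultrafilter ι) (G : ι → Type*)
    [∀ i, Group (G i)] : Group (UProd 𝒰 G) where
  mul := Quotient.map₂ (fun f g i => f i * g i)
    (fun f f' h₁ g g' h₂ => (uprodSetoid_ev h₂).mp ((uprodSetoid_ev h₁).mono
      fun i e₁ e₂ => show f i * g i = f' i * g' i by rw [e₁, e₂]))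
  one := UProd.mk 𝒰 G fun _ => 1
  inv := Quotient.map (fun f i => (f i)⁻¹)
    (fun f f' h => (uprodSetoid_ev h).mono fun i e => show (f i)⁻¹ = (f' i)⁻¹ by rw [e])
  mul_assoc := by
    rintro ⟨f⟩ ⟨g⟩ ⟨h⟩
    exact Quotient.sound (Filter.Eventually.of_forall fun i => mul_assoc _ _ _)
  one_mul := by
    rintro ⟨f⟩
    exact Quotient.sound (Filter.Eventually.of_forall fun i => one_mul _)
  mul_one := by
    rintro ⟨f⟩
    exact Quotient.sound (Filter.Eventually.of_forall fun i => mul_one _)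
  inv_mul_cancel := by
    rintro ⟨f⟩
    exact Quotient.sound (Filter.Eventually.of_forall fun i => inv_mul_cancel _)

/-- A group contains a free subgroup of rank 2 if there is an injective homomorphism from
the free group on two generators into it. -/
def ContainsFreeGroupRank2 (G : Type*) [Group G] : Prop :=
  ∃ f : FreeGroup Bool →* G, Function.Injective f

/-- A group `G` involves a group `H` (`H` is a section of `G`) if some subgroup of `G`
has a quotient isomorphic to `H`, equivalently there is a subgroup of `G` admitting a
surjective homomorphism onto `H`. -/
def Involves (G : Type*) [Group G] (H : Type*) [Group H] : Prop :=
  ∃ (A : Subgroup G) (φ : ↥A →* H), Function.Surjective φ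

section AuxFree
open FreeGroup

/-- The ball of radius `k` in the free group on two generators. -/
private abbrev FBall (k : ℕ) := {x : FreeGroup Bool // x.toWord.length ≤ k}

private instance fBallFinite (k : ℕ) : Finite (FBall k) := by
  have hinj : Function.Injective
      (fun x : FBall k => (fun i : Fin k => x.1.toWord[i.1]? : Fin k → Option (Bool × Bool))) := by
    intro x y h
    apply Subtype.ext
    apply FreeGroup.toWord_injective
    apply List.ext_getElem?
    intro i
    by_cases hi : i < k
    · exact congrFun h ⟨i, hi⟩
    · rw [List.getElem?_eq_none (x.2.trans (Nat.le_of_not_lt hi)),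
        List.getElem?_eq_none (y.2.trans (Nat.le_of_not_lt hi))]
  exact Finite.of_injective _ hinj

private noncomputable instance fBallFintype (k : ℕ) : Fintype (FBall k) :=
  Fintype.ofFinite _

/-- The partial bijection `x ↦ (of a) * x` on the ball, as an equivalence of subtypes. -/
private def fBallAux (k : ℕ) (a : Bool) :
    {x : FBall k // (FreeGroup.of a * x.1).toWord.length ≤ k} ≃
    {x : FBall k // ((FreeGroup.of a)⁻¹ * x.1).toWord.length ≤ k} where
  toFun x := ⟨⟨FreeGroup.of a * x.1.1, x.2⟩, by
    simpa [inv_mul_cancel_left] using x.1.2⟩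
  invFun y := ⟨⟨(FreeGroup.of a)⁻¹ * y.1.1, y.2⟩, by
    simpa [mul_inv_cancel_left] using y.1.2⟩
  left_inv x := by
    apply Subtype.ext; apply Subtype.ext; simp
  right_inv y := by
    apply Subtype.ext; apply Subtype.ext; simp

/-- Extension of the partial bijection to a permutation of the ball. -/
private noncomputable def fBallPerm (k : ℕ) (a : Bool) : Equiv.Perm (FBall k) :=
  (fBallAux k a).extendSubtype

private lemma fBallPerm_apply (k : ℕ) (a : Bool) (x : FreeGroup Bool)
    (hx : x.toWord.length ≤ k) (hax : (FreeGroup.of a * x).toWord.length ≤ k) :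
    fBallPerm k a ⟨x, hx⟩ = ⟨FreeGroup.of a * x, hax⟩ := by
  have h := (fBallAux k a).extendSubtype_apply_of_mem ⟨x, hx⟩ hax
  rw [fBallPerm, h]
  rfl

private lemma fBallPerm_inv_apply (k : ℕ) (a : Bool) (x : FreeGroup Bool)
    (hx : x.toWord.length ≤ k) (hax : ((FreeGroup.of a)⁻¹ * x).toWord.length ≤ k) :
    (fBallPerm k a)⁻¹ ⟨x, hx⟩ = ⟨(FreeGroup.of a)⁻¹ * x, hax⟩ := by
  rw [Equiv.Perm.inv_eq_iff_eq]
  rw [fBallPerm_apply k a _ hax (by simpa [mul_inv_cancel_left] using hx)]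
  apply Subtype.ext
  simp

private lemma reduce_tail {α : Type*} [DecidableEq α] {x : α × Bool} {L : List (α × Bool)}
    (h : FreeGroup.reduce (x :: L) = x :: L) : FreeGroup.reduce L = L := by
  have hc := FreeGroup.reduce.cons (L := L) x
  rw [h] at hc
  rcases hL : FreeGroup.reduce L with _ | ⟨y, ys⟩
  · rw [hL] at hc
    have : x :: L = [x] := hc
    simp only [List.cons.injEq, true_and] at this
    subst this
    exact hL
  · rw [hL] at hc
    have hc' : x :: L = if x.1 = y.1 ∧ x.2 = !y.2 then ys else x :: y :: ys := hc
    split_ifs at hc' with hxy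
    · exfalso
      have hred := FreeGroup.Red.length_le (FreeGroup.reduce.red (L := L))
      rw [hL, ← hc'] at hred
      simp only [List.length_cons] at hred
      omega
    · simp only [List.cons.injEq, true_and] at hc'
      exact hc'.symm

private lemma mk_single_false (a : Bool) :
    FreeGroup.mk [(a, false)] = (FreeGroup.of a)⁻¹ := by
  rw [show FreeGroup.of a = FreeGroup.mk [(a, true)] from rfl, FreeGroup.inv_mk]
  rfl

private lemma lift_fBallPerm_eq (k : ℕ) (L : List (Bool × Bool)) :
    ∀ (w x : FreeGroup Bool), w.toWord = L →
    (w * x).toWord = w.toWord ++ x.toWord →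
    ∀ (hx : x.toWord.length ≤ k) (hwx : (w * x).toWord.length ≤ k),
    FreeGroup.lift (fBallPerm k) w ⟨x, hx⟩ = ⟨w * x, hwx⟩ := by
  induction L with
  | nil =>
    intro w x hL hsplit hx hwx
    have hw : w = 1 := FreeGroup.toWord_eq_nil_iff.mp hL
    subst hw
    rw [_root_.map_one]
    exact Subtype.ext (one_mul x).symm
  | cons p t ih =>
    intro w x hL hsplit hx hwx
    obtain ⟨a, b⟩ := p
    set ℓ : FreeGroup Bool := FreeGroup.mk [(a, b)] with hℓ
    set w' : FreeGroup Bool := FreeGroup.mk t with hw'def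
    -- w = ℓ * w'
    have hw : w = ℓ * w' := by
      rw [hℓ, hw'def, FreeGroup.mul_mk, List.singleton_append, ← hL, FreeGroup.mk_toWord]
    -- reduced facts
    have hredL : FreeGroup.reduce ((a, b) :: t) = (a, b) :: t := by
      rw [← hL]; exact FreeGroup.reduce_toWord w
    have hw'word : w'.toWord = t := by
      rw [hw'def, FreeGroup.toWord_mk, reduce_tail hredL]
    -- (w * x).toWord = (a,b) :: (t ++ x.toWord)
    have hsplit2 : (w * x).toWord = (a, b) :: (t ++ x.toWord) := by
      rw [hsplit, hL]; rfl
    have hred2 : FreeGroup.reduce (t ++ x.toWord) = t ++ x.toWord := by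
      apply reduce_tail (x := (a, b))
      rw [← hsplit2]
      exact FreeGroup.reduce_toWord _
    have hkey : w' * x = FreeGroup.mk (t ++ x.toWord) := by
      rw [hw'def, ← FreeGroup.mul_mk, FreeGroup.mk_toWord]
    have hw'x : (w' * x).toWord = t ++ x.toWord := by
      rw [hkey, FreeGroup.toWord_mk, hred2]
    have hsplit' : (w' * x).toWord = w'.toWord ++ x.toWord := by
      rw [hw'x, hw'word]
    have hlen' : (w' * x).toWord.length ≤ k := by
      have := hwx
      rw [hsplit2] at this
      rw [hw'x]
      simp only [List.length_cons] at this
      omega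
    have hIH := ih w' x hw'word hsplit' hx hlen'
    have hmulassoc : ℓ * (w' * x) = w * x := by rw [hw, mul_assoc]
    have h2 : FreeGroup.lift (fBallPerm k) w
        = FreeGroup.lift (fBallPerm k) ℓ * FreeGroup.lift (fBallPerm k) w' := by
      rw [hw, _root_.map_mul]
    rw [h2, Equiv.Perm.mul_apply, hIH]
    cases b with
    | true =>
      have hℓof : ℓ = FreeGroup.of a := rfl
      rw [hℓof, FreeGroup.lift_apply_of]
      rw [fBallPerm_apply k a _ hlen' (by rw [← hℓof, hmulassoc]; exact hwx)]
      apply Subtype.ext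
      show FreeGroup.of a * (w' * x) = w * x
      rw [← hℓof]
      exact hmulassoc
    | false =>
      have hℓof : ℓ = (FreeGroup.of a)⁻¹ := mk_single_false a
      rw [hℓof, _root_.map_inv, FreeGroup.lift_apply_of]
      rw [fBallPerm_inv_apply k a _ hlen' (by rw [← hℓof, hmulassoc]; exact hwx)]
      apply Subtype.ext
      show (FreeGroup.of a)⁻¹ * (w' * x) = w * x
      rw [← hℓof]
      exact hmulassoc

private lemma lift_fBallPerm_ne_one (k : ℕ) (w : FreeGroup Bool) (hw : w ≠ 1)
    (hlen : w.toWord.length ≤ k) : FreeGroup.lift (fBallPerm k) w ≠ 1 := by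
  intro hcontra
  have h1 : ((1 : FreeGroup Bool)).toWord.length ≤ k := by
    simp [FreeGroup.toWord_one]
  have hwx : (w * 1).toWord.length ≤ k := by rwa [mul_one]
  have := lift_fBallPerm_eq k w.toWord w 1 rfl
    (by simp [FreeGroup.toWord_one]) h1 hwx
  rw [hcontra] at this
  simp only [Equiv.Perm.coe_one, id_eq] at this
  apply hw
  have := congrArg Subtype.val this
  simpa using this.symm

private lemma exists_hom_alternating (k n : ℕ) (hn : 2 * Nat.card (FBall k) ≤ n) :
    ∃ θ : FreeGroup Bool →* alternatingGroup (Fin n),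
      ∀ w : FreeGroup Bool, w ≠ 1 → w.toWord.length ≤ k → θ w ≠ 1 := by
  classical
  -- the diagonal homomorphism into the permutations of two copies of the ball
  let diag : Equiv.Perm (FBall k) →* Equiv.Perm (FBall k ⊕ FBall k) :=
    (Equiv.Perm.sumCongrHom _ _).comp ((MonoidHom.id _).prod (MonoidHom.id _))
  have hdiag : ∀ σ, diag σ = Equiv.sumCongr σ σ := fun _ => rfl
  have hdiag_inj : Function.Injective diag := by
    intro σ τ h
    have h2 : ((σ, σ) : Equiv.Perm (FBall k) × Equiv.Perm (FBall k)) = (τ, τ) :=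
      Equiv.Perm.sumCongrHom_injective h
    exact congrArg Prod.fst h2
  -- an embedding of the two copies of the ball into `Fin n`
  have hcard : Fintype.card (FBall k ⊕ FBall k) ≤ Fintype.card (Fin n) := by
    rw [Fintype.card_sum, Fintype.card_fin]
    have : Nat.card (FBall k) = Fintype.card (FBall k) := Nat.card_eq_fintype_card
    omega
  obtain ⟨ι⟩ := Function.Embedding.nonempty_of_card_le hcard
  -- signs
  have hsign : ∀ e : Equiv.Perm (FBall k ⊕ FBall k),
      Equiv.Perm.sign ((Equiv.Perm.viaEmbeddingHom ι) e) = Equiv.Perm.sign e := by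
    intro e
    rw [Equiv.Perm.viaEmbeddingHom_apply]
    exact @Equiv.Perm.sign_extendDomain _ _ _ _ _ _ e _ (fun a => Classical.propDecidable _) _
  let big : FreeGroup Bool →* Equiv.Perm (Fin n) :=
    ((Equiv.Perm.viaEmbeddingHom ι).comp diag).comp (FreeGroup.lift (fBallPerm k))
  have hmem : ∀ w : FreeGroup Bool, big w ∈ alternatingGroup (Fin n) := by
    intro w
    rw [Equiv.Perm.mem_alternatingGroup]
    show Equiv.Perm.sign ((Equiv.Perm.viaEmbeddingHom ι)
      (diag (FreeGroup.lift (fBallPerm k) w))) = 1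
    rw [hsign, hdiag, Equiv.Perm.sign_sumCongr]
    exact Int.units_mul_self _
  refine ⟨big.codRestrict (alternatingGroup (Fin n)) hmem, ?_⟩
  intro w hw hlen hcontra
  apply lift_fBallPerm_ne_one k w hw hlen
  have hbig : big w = 1 := by
    have := congrArg Subtype.val hcontra
    simpa using this
  have h1 : (Equiv.Perm.viaEmbeddingHom ι) (diag (FreeGroup.lift (fBallPerm k) w))
      = (Equiv.Perm.viaEmbeddingHom ι) (diag 1) := by
    rw [_root_.map_one, _root_.map_one]; exact hbig
  have h2 := Equiv.Perm.viaEmbeddingHom_injective ι h1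
  have h3 := hdiag_inj h2
  simpa using h3

private lemma involves_lemma (k n : ℕ) (hn : 2 * Nat.card (FBall k) ≤ n)
    (H : Type*) [Group H] (h : Involves H ↥(alternatingGroup (Fin n))) :
    ∃ ψ : FreeGroup Bool →* H,
      ∀ w : FreeGroup Bool, w ≠ 1 → w.toWord.length ≤ k → ψ w ≠ 1 := by
  obtain ⟨A, φ, hφ⟩ := h
  obtain ⟨θ, hθ⟩ := exists_hom_alternating k n hn
  choose g hg using fun b => hφ (θ (FreeGroup.of b))
  have key : φ.comp (FreeGroup.lift g) = θ :=
    FreeGroup.ext_hom _ _ (fun b => by simp [hg])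
  refine ⟨A.subtype.comp (FreeGroup.lift g), ?_⟩
  intro w hw hlen hcontra
  apply hθ w hw hlen
  have h1 : FreeGroup.lift g w = 1 := by
    apply Subgroup.subtype_injective
    simpa using hcontra
  rw [← key]
  simp [MonoidHom.comp_apply, h1]

end AuxFree

/-- If `(G n)` is a family of finite groups such that, for every `n` in some infinite set
`U ⊆ ℕ`, the group `G n` involves the alternating group `A_n`, then for every nonprincipal
ultrafilter containing `U` the corresponding ultraproduct of the `G n` contains a free
subgroup of rank 2. -/
theorem ultraproduct_involving_alternating_contains_free (G : ℕ → Type*)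
    [∀ n, Group (G n)] [∀ n, Finite (G n)] (U : Set ℕ) (hU : U.Infinite)
    (hinv : ∀ n ∈ U, Involves (G n) ↥(alternatingGroup (Fin n)))
    (𝒰 : Ultrafilter ℕ) (hnp : ∀ n : ℕ, (𝒰 : Filter ℕ) ≠ pure n) (hU𝒰 : U ∈ 𝒰) :
    ContainsFreeGroupRank2 (UProd 𝒰 G) := by
  classical
  -- nonprincipal ultrafilters contain all cofinite sets
  have hcof : ∀ S : Set ℕ, S.Finite → Sᶜ ∈ 𝒰 := by
    intro S hS
    by_contra hc
    have hS𝒰 : S ∈ 𝒰 := by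
      by_contra hn
      exact hc (Ultrafilter.compl_mem_iff_notMem.mpr hn)
    obtain ⟨x, -, hx⟩ := Ultrafilter.eq_pure_of_finite_mem hS hS𝒰
    exact hnp x (by rw [hx]; rfl)
  -- the cut-off function
  set m : ℕ → ℕ := fun n => Nat.findGreatest (fun j => 2 * Nat.card (FBall j) ≤ n) n with hm
  have hball0 : Nat.card (FBall 0) = 1 := by
    rw [Nat.card_eq_one_iff_unique]
    constructor
    · constructor
      intro x y
      apply Subtype.ext
      have hx : x.1.toWord = [] := List.length_eq_zero_iff.mp (Nat.le_zero.mp x.2)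
      have hy : y.1.toWord = [] := List.length_eq_zero_iff.mp (Nat.le_zero.mp y.2)
      rw [FreeGroup.toWord_eq_nil_iff.mp hx, FreeGroup.toWord_eq_nil_iff.mp hy]
    · exact ⟨⟨1, by simp [FreeGroup.toWord_one]⟩⟩
  -- a family of homomorphisms
  have hex : ∀ n, ∃ ψ : FreeGroup Bool →* G n, (n ∈ U → 2 ≤ n →
      ∀ w : FreeGroup Bool, w ≠ 1 → w.toWord.length ≤ m n → ψ w ≠ 1) := by
    intro n
    by_cases hn : n ∈ U ∧ 2 ≤ n
    · obtain ⟨hnU, hn2⟩ := hn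
      have hP0 : 2 * Nat.card (FBall 0) ≤ n := by rw [hball0]; omega
      have hspec : 2 * Nat.card (FBall (m n)) ≤ n :=
        Nat.findGreatest_spec (P := fun j => 2 * Nat.card (FBall j) ≤ n) (Nat.zero_le n) hP0
      obtain ⟨ψ, hψ⟩ := involves_lemma (m n) n hspec (G n) (hinv n hnU)
      exact ⟨ψ, fun _ _ => hψ⟩
    · exact ⟨1, fun h1 h2 => absurd ⟨h1, h2⟩ hn⟩
  choose ψ hψ using hex
  -- the homomorphism into the ultraproduct
  let Φ : FreeGroup Bool →* (∀ n, G n) :=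
    { toFun := fun w n => ψ n w
      map_one' := by funext n; simp
      map_mul' := by intro a b; funext n; simp }
  let q : (∀ n, G n) →* UProd 𝒰 G :=
    { toFun := UProd.mk 𝒰 G
      map_one' := rfl
      map_mul' := fun f g => rfl }
  refine ⟨q.comp Φ, (injective_iff_map_eq_one _).mpr ?_⟩
  intro w hw1
  by_contra hw
  have hq : UProd.mk 𝒰 G (fun n => ψ n w) = UProd.mk 𝒰 G (fun _ => 1) := hw1
  have hev : ∀ᶠ n in (𝒰 : Filter ℕ), ψ n w = 1 := uprodSetoid_ev (Quotient.exact hq)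
  have hE : {n | ψ n w = 1} ∈ 𝒰 := hev
  set k := w.toWord.length with hk
  set N := max (2 * Nat.card (FBall k)) (max k 2) with hN
  have hTset : {n : ℕ | N ≤ n} ∈ 𝒰 := by
    have h1 := hcof {n : ℕ | n < N} (Set.finite_lt_nat N)
    have h2 : {n : ℕ | n < N}ᶜ = {n : ℕ | N ≤ n} := by
      ext n; simp [not_lt]
    rwa [h2] at h1
  have hT : (U ∩ {n : ℕ | N ≤ n}) ∈ 𝒰 := Filter.inter_mem hU𝒰 hTset
  obtain ⟨n, hn⟩ := Filter.nonempty_of_mem (Filter.inter_mem hT hE)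
  obtain ⟨⟨hnU, hnN⟩, hn1⟩ := hn
  have hnN' : N ≤ n := hnN
  have hn2 : 2 ≤ n := le_trans (le_trans (le_max_right k 2) (le_max_right _ _)) hnN'
  have hkm : k ≤ m n := by
    apply Nat.le_findGreatest
    · exact le_trans (le_trans (le_max_left k 2) (le_max_right _ _)) hnN'
    · exact le_trans (le_max_left _ _) hnN'
  exact hψ n hnU hn2 w hw hkm hn1
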